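/- Let q be an odd prime power and let F_q be the finite field with q elements, with algebraic closure F̄_q. Then: (1) the number of unordered pairs {f, g} of distinct monic irreducible quadratic polynomials over F_q with f ▷ g = g and g ▷ f = f (type I stable 2-sets) equals (q − 1)/4 if q ≡ 1 (mod 4) and (q − 3)/4 if q ≡ 3 (mod 4); (2) there are no pairs with f ▷ g = f and g ▷ f = g (type II); and (3) the number of unordered pairs {f, g} of distinct monic irreducible quadratics over F_q with f ▷ g = g and g ▷ f = g (type III stable 2-sets) equals q − 1. -/

import Mathlib

open Polynomial

/-- `f` is a monic irreducible quadratic. -/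
def IsQuad {F : Type*} [Field F] (f : F[X]) : Prop :=
  f.Monic ∧ Irreducible f ∧ f.natDegree = 2

/-- `WedgeEq f g h` expresses `f ▷ g = h`: for every root `α` of `g` in the algebraic
closure, the minimal polynomial of `f(α)` equals `h`. -/
def WedgeEq {F : Type*} [Field F] (f g h : F[X]) : Prop :=
  ∀ α : AlgebraicClosure F, Polynomial.aeval α g = 0 →
    minpoly F (Polynomial.aeval α f) = h


namespace StableAux

variable {F : Type*} [Field F]

noncomputable def Pq (a d : F) : F[X] := X ^ 2 - C (2 * a) * X + C (a ^ 2 - d)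

lemma Pq_coeff_one (a d : F) : (Pq a d).coeff 1 = -(2 * a) := by
  simp [Pq, coeff_X_pow, ← map_pow]

lemma Pq_coeff_zero (a d : F) : (Pq a d).coeff 0 = a ^ 2 - d := by
  simp [Pq, coeff_X_pow, ← map_pow]

lemma Pq_monic (a d : F) : (Pq a d).Monic := by
  unfold Pq; monicity!

lemma Pq_natDegree (a d : F) : (Pq a d).natDegree = 2 := by
  unfold Pq; compute_degree!

lemma Pq_inj {a d a' d' : F} (h2 : (2:F) ≠ 0) (h : Pq a d = Pq a' d') : a = a' ∧ d = d' := by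
  have h1 := congrArg (fun p => Polynomial.coeff p 1) h
  have h0 := congrArg (fun p => Polynomial.coeff p 0) h
  simp only [Pq_coeff_one, Pq_coeff_zero] at h1 h0
  have ha : a = a' := mul_left_cancel₀ h2 (by linear_combination -h1)
  refine ⟨ha, ?_⟩
  rw [ha] at h0
  linear_combination -h0

lemma Pq_aeval {R : Type*} [CommRing R] [Algebra F R] (a d : F) (α : R) :
    aeval α (Pq a d) = (α - algebraMap F R a) ^ 2 - algebraMap F R d := by
  simp only [Pq, map_add, map_sub, map_mul, map_pow, aeval_X, aeval_C, map_ofNat]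
  ring

end StableAux

namespace StableAux
variable {F : Type*} [Field F]

lemma Pq_irreducible {a d : F} (hd : ¬ IsSquare d) : Irreducible (Pq a d) := by
  rw [(Pq_monic a d).irreducible_iff_roots_eq_zero_of_degree_le_three
    (by rw [Pq_natDegree]) (by rw [Pq_natDegree]; norm_num)]
  by_contra h
  obtain ⟨r, hr⟩ := Multiset.exists_mem_of_ne_zero h
  have hroot : (Pq a d).IsRoot r := isRoot_of_mem_roots hr
  have : (r - a) ^ 2 = d := by
    have := hroot
    simp only [IsRoot, Pq, eval_add, eval_sub, eval_mul, eval_pow, eval_X, eval_C] at this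
    linear_combination this
  exact hd ⟨r - a, by rw [← this]; ring⟩

lemma isQuad_iff {f : F[X]} (h2 : (2:F) ≠ 0) :
    IsQuad f ↔ ∃ a d : F, ¬ IsSquare d ∧ f = Pq a d := by
  constructor
  · rintro ⟨hm, hirr, hdeg⟩
    set a : F := -(f.coeff 1) / 2 with ha
    set d : F := a ^ 2 - f.coeff 0 with hd
    have hc2 : f.coeff 2 = 1 := by
      have := hm.coeff_natDegree
      rwa [hdeg] at this
    have hexp : f = X ^ 2 + C (f.coeff 1) * X + C (f.coeff 0) := by
      ext n
      rcases Nat.lt_or_ge n 3 with hn | hn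
      · interval_cases n
        · simp [coeff_X_pow, coeff_C, coeff_X]
        · simp [coeff_X_pow, coeff_C, coeff_X]
        · simp [coeff_X_pow, coeff_C, coeff_X, hc2]
      · have hn0 : n ≠ 0 := by omega
        have hn1 : n ≠ 1 := by omega
        have hn2 : n ≠ 2 := by omega
        rw [f.coeff_eq_zero_of_natDegree_lt (by omega : f.natDegree < n)]
        simp [coeff_X_pow, coeff_C, coeff_X, hn0, hn1, hn2, Ne.symm hn1]
    have hf : f = Pq a d := by
      have e1 : (2:F) * a = -(f.coeff 1) := by rw [ha]; field_simp
      have e2 : a ^ 2 - d = f.coeff 0 := by rw [hd]; ring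
      unfold Pq
      rw [e1, e2, map_neg]
      nth_rewrite 1 [hexp]
      ring
    refine ⟨a, d, fun hsq => ?_, hf⟩
    obtain ⟨r, hr⟩ := hsq
    have hfactor : Pq a d = (X - C (a - r)) * (X - C (a + r)) := by
      unfold Pq
      rw [hr, show a ^ 2 - r * r = (a - r) * (a + r) by ring,
        show (2:F) * a = (a - r) + (a + r) by ring, C_mul, C_add]
      ring
    rw [hf, hfactor] at hirr
    rcases hirr.isUnit_or_isUnit rfl with hu | hu
    · exact Polynomial.not_isUnit_X_sub_C _ hu
    · exact Polynomial.not_isUnit_X_sub_C _ hu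
  · rintro ⟨a, d, hd, rfl⟩
    exact ⟨Pq_monic a d, Pq_irreducible hd, Pq_natDegree a d⟩

end StableAux

namespace StableAux
variable {F : Type*} [Field F]

lemma algebraMap_inj : Function.Injective (algebraMap F (AlgebraicClosure F)) :=
  (algebraMap F (AlgebraicClosure F)).injective

lemma exists_sqrt (d : F) : ∃ s : AlgebraicClosure F, s ^ 2 = algebraMap F (AlgebraicClosure F) d :=
  IsAlgClosed.exists_pow_nat_eq _ two_pos

lemma indep {d : F} (hd : ¬ IsSquare d) {s : AlgebraicClosure F}
    (hs : s ^ 2 = algebraMap F (AlgebraicClosure F) d) {x y : F}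
    (h : algebraMap F (AlgebraicClosure F) x + algebraMap F (AlgebraicClosure F) y * s = 0) :
    x = 0 ∧ y = 0 := by
  by_cases hy : y = 0
  · subst hy
    simp only [map_zero, zero_mul, add_zero] at h
    exact ⟨algebraMap_inj (by simpa using h), rfl⟩
  · exfalso
    have hyK : algebraMap F (AlgebraicClosure F) y ≠ 0 := fun hc => hy (algebraMap_inj (by simpa using hc))
    have hsF : s = algebraMap F (AlgebraicClosure F) (-x / y) := by
      rw [map_div₀, map_neg]
      field_simp
      linear_combination h
    apply hd
    refine ⟨-x / y, ?_⟩
    apply algebraMap_inj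
    rw [← hs, hsF, map_mul]
    ring
  
lemma Pq_root_iff {b e : F} {s α : AlgebraicClosure F}
    (hs : s ^ 2 = algebraMap F (AlgebraicClosure F) e) :
    aeval α (Pq b e) = 0 ↔
      α = algebraMap F (AlgebraicClosure F) b + s ∨ α = algebraMap F (AlgebraicClosure F) b - s := by
  rw [Pq_aeval]
  constructor
  · intro h
    have hz : (α - algebraMap F (AlgebraicClosure F) b - s) *
        (α - algebraMap F (AlgebraicClosure F) b + s) = 0 := by
      linear_combination h - hs
    rcases mul_eq_zero.mp hz with hz | hz
    · left; linear_combination hz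
    · right; linear_combination hz
  · rintro (rfl | rfl)
    · linear_combination hs
    · linear_combination hs

end StableAux

namespace StableAux
variable {F : Type*} [Field F]

lemma key_fwd {R : Type*} [CommRing R] (T E D Cc M s : R)
    (hs : s ^ 2 = E)
    (hz : ((T + s) ^ 2 - D - Cc) ^ 2 - M = 0) :
    ((T ^ 2 + E - D - Cc) ^ 2 + 4 * T ^ 2 * E - M) + (4 * T * (T ^ 2 + E - D - Cc)) * s = 0 := by
  linear_combination hz - (4 * T ^ 2 + (s ^ 2 - E) + 2 * (T ^ 2 + E - D - Cc) + 4 * T * s) * hs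

lemma key_bwd {R : Type*} [CommRing R] (T E D Cc M s σ : R)
    (hs : s ^ 2 = E) (hσ : σ = 1 ∨ σ = -1)
    (k1 : T * (T ^ 2 + E - D - Cc) = 0)
    (k2 : (T ^ 2 + E - D - Cc) ^ 2 + 4 * T ^ 2 * E = M) :
    ((T + σ * s) ^ 2 - D - Cc) ^ 2 - M = 0 := by
  rcases hσ with rfl | rfl
  · linear_combination k2 + (4 * s) * k1 +
      (4 * T ^ 2 + (s ^ 2 - E) + 2 * (T ^ 2 + E - D - Cc) + 4 * T * s) * hs
  · linear_combination k2 - (4 * s) * k1 +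
      (4 * T ^ 2 + (s ^ 2 - E) + 2 * (T ^ 2 + E - D - Cc) - 4 * T * s) * hs

lemma four_ne_zero (h2 : (2:F) ≠ 0) : (4:F) ≠ 0 := by
  intro hc
  exact h2 (by linear_combination (2:F)⁻¹ * hc - 2 * (mul_inv_cancel₀ h2))

lemma wedgeEq_iff (h2 : (2:F) ≠ 0) {a d b e c m : F}
    (hd : ¬ IsSquare d) (he : ¬ IsSquare e) (hm : ¬ IsSquare m) :
    WedgeEq (Pq a d) (Pq b e) (Pq c m) ↔
      ((b - a) * ((b - a) ^ 2 + e - d - c) = 0 ∧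
        ((b - a) ^ 2 + e - d - c) ^ 2 + 4 * (b - a) ^ 2 * e = m) := by
  have h4 : (4:F) ≠ 0 := four_ne_zero h2
  obtain ⟨s, hs⟩ := exists_sqrt (F := F) e
  constructor
  · intro hW
    have hroot : aeval (algebraMap F (AlgebraicClosure F) b + s) (Pq b e) = 0 :=
      (Pq_root_iff hs).mpr (Or.inl rfl)
    have hmin := hW _ hroot
    have hz : aeval (aeval (algebraMap F (AlgebraicClosure F) b + s) (Pq a d)) (Pq c m) = 0 := by
      rw [← hmin]
      exact minpoly.aeval F _
    rw [Pq_aeval, Pq_aeval] at hz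
    have hz' : ((algebraMap F (AlgebraicClosure F) (b - a) + s) ^ 2
        - algebraMap F (AlgebraicClosure F) d - algebraMap F (AlgebraicClosure F) c) ^ 2
        - algebraMap F (AlgebraicClosure F) m = 0 := by
      rw [map_sub]
      linear_combination hz
    have hkey := key_fwd (algebraMap F (AlgebraicClosure F) (b - a))
      (algebraMap F (AlgebraicClosure F) e) (algebraMap F (AlgebraicClosure F) d)
      (algebraMap F (AlgebraicClosure F) c) (algebraMap F (AlgebraicClosure F) m) s hs hz'
    have hz2 : algebraMap F (AlgebraicClosure F)
          (((b - a) ^ 2 + e - d - c) ^ 2 + 4 * (b - a) ^ 2 * e - m)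
        + algebraMap F (AlgebraicClosure F) (4 * ((b - a) * ((b - a) ^ 2 + e - d - c))) * s = 0 := by
      simp only [map_add, map_sub, map_mul, map_pow, map_ofNat] at hkey ⊢
      linear_combination hkey
    obtain ⟨hA, hB⟩ := indep he hs hz2
    refine ⟨?_, by linear_combination hA⟩
    rcases mul_eq_zero.mp hB with hB | hB
    · exact absurd hB h4
    · exact hB
  · rintro ⟨k1, k2⟩ α hroot
    have hz : aeval (aeval α (Pq a d)) (Pq c m) = 0 := by
      rw [Pq_aeval, Pq_aeval]
      have kk1 := congrArg (algebraMap F (AlgebraicClosure F)) k1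
      have kk2 := congrArg (algebraMap F (AlgebraicClosure F)) k2
      simp only [map_add, map_sub, map_mul, map_pow, map_ofNat, map_zero] at kk1 kk2
      rcases (Pq_root_iff hs).mp hroot with rfl | rfl
      · have hb := key_bwd (algebraMap F (AlgebraicClosure F) b - algebraMap F (AlgebraicClosure F) a)
          (algebraMap F (AlgebraicClosure F) e) (algebraMap F (AlgebraicClosure F) d)
          (algebraMap F (AlgebraicClosure F) c) (algebraMap F (AlgebraicClosure F) m) s 1 hs
          (Or.inl rfl) kk1 kk2
        linear_combination hb
      · have hb := key_bwd (algebraMap F (AlgebraicClosure F) b - algebraMap F (AlgebraicClosure F) a)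
          (algebraMap F (AlgebraicClosure F) e) (algebraMap F (AlgebraicClosure F) d)
          (algebraMap F (AlgebraicClosure F) c) (algebraMap F (AlgebraicClosure F) m) s (-1) hs
          (Or.inr rfl) kk1 kk2
        linear_combination hb
    exact (minpoly.eq_of_irreducible_of_monic (Pq_irreducible hm) hz (Pq_monic c m)).symm

end StableAux

namespace StableAux
variable {F : Type*} [Field F]

lemma ns_ne_zero {d : F} (hd : ¬ IsSquare d) : d ≠ 0 := by
  rintro rfl; exact hd ⟨0, by ring⟩

lemma no_typeII (h2 : (2:F) ≠ 0) :
    ¬ ∃ f g : F[X], f ≠ g ∧ IsQuad f ∧ IsQuad g ∧ WedgeEq f g f ∧ WedgeEq g f g := by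
  rintro ⟨f, g, hne, hf, hg, w1, w2⟩
  obtain ⟨a, d, hd, rfl⟩ := (isQuad_iff h2).mp hf
  obtain ⟨b, e, he, rfl⟩ := (isQuad_iff h2).mp hg
  obtain ⟨E1, E2⟩ := (wedgeEq_iff h2 hd he hd).mp w1
  obtain ⟨E3, E4⟩ := (wedgeEq_iff h2 he hd he).mp w2
  by_cases hab : b - a = 0
  · exact hd ⟨(b-a)^2 + e - d - a, by linear_combination -E2 + (4*e*(b-a))*hab⟩
  · have hab' : a - b ≠ 0 := fun h => hab (by linear_combination -h)
    have hu : (b-a)^2 + e - d - a = 0 := by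
      rcases mul_eq_zero.mp E1 with h | h
      · exact absurd h hab
      · exact h
    have hu' : (a-b)^2 + d - e - b = 0 := by
      rcases mul_eq_zero.mp E3 with h | h
      · exact absurd h hab'
      · exact h
    have hd4 : d = 4*(b-a)^2*e := by linear_combination -E2 + ((b-a)^2+e-d-a)*hu
    have he4 : e = 4*(b-a)^2*d := by linear_combination -E4 + ((a-b)^2+d-e-b)*hu'
    have ht : b - a = 2*(d - e) := by linear_combination hu - hu'
    have hdne : d - e ≠ 0 := by
      intro h
      exact hab (by linear_combination ht + 2*h)
    have h4t : 4*(b-a)^2 = -1 := by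
      have hfac : (d - e) * (4*(b-a)^2 + 1) = 0 := by linear_combination hd4 - he4
      rcases mul_eq_zero.mp hfac with h | h
      · exact absurd h hdne
      · linear_combination h
    have hde : d = -e := by linear_combination hd4 + e*h4t
    have htm : b - a = -4*e := by linear_combination ht + 2*hde
    have h64 : 64 * e^2 = -1 := by linear_combination h4t - 4*((b-a) - 4*e)*htm
    apply he
    refine ⟨(1 + 8*e)/4, ?_⟩
    have h4 : (4:F) ≠ 0 := four_ne_zero h2
    field_simp
    linear_combination -h64

section Half
variable {h : F}

lemma half_ne_zero (hh : 2 * h = 1) : h ≠ 0 := by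
  rintro rfl
  rw [mul_zero] at hh
  exact one_ne_zero hh.symm

lemma two_ne_zero' (hh : 2 * h = 1) : (2:F) ≠ 0 := by
  rintro hc
  rw [hc, zero_mul] at hh
  exact one_ne_zero hh.symm

lemma four_ne_zero' (hh : 2 * h = 1) : (4:F) ≠ 0 := four_ne_zero (two_ne_zero' hh)

lemma typeI_eq (hh : 2 * h = 1) :
    {S : Set F[X] | ∃ f g : F[X], f ≠ g ∧ IsQuad f ∧ IsQuad g ∧ S = {f, g} ∧
        WedgeEq f g g ∧ WedgeEq g f f} =
      (fun d => ({Pq 0 d, Pq h (d + h^2)} : Set F[X])) ''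
        {d : F | ¬ IsSquare d ∧ ¬ IsSquare (d + h^2)} := by
  have h2 : (2:F) ≠ 0 := two_ne_zero' hh
  have h4 : (4:F) ≠ 0 := four_ne_zero' hh
  ext S
  constructor
  · rintro ⟨f, g, hne, hf, hg, rfl, w1, w2⟩
    obtain ⟨a, d, hd, rfl⟩ := (isQuad_iff h2).mp hf
    obtain ⟨b, e, he, rfl⟩ := (isQuad_iff h2).mp hg
    obtain ⟨E1, E2⟩ := (wedgeEq_iff h2 hd he he).mp w1
    obtain ⟨E3, E4⟩ := (wedgeEq_iff h2 he hd hd).mp w2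
    have he0 : e ≠ 0 := ns_ne_zero he
    have hd0 : d ≠ 0 := ns_ne_zero hd
    by_cases hab : b - a = 0
    · exact absurd ⟨(b-a)^2 + e - d - b, by linear_combination -E2 + (4*e*(b-a))*hab⟩ he
    · have hab' : a - b ≠ 0 := fun hx => hab (by linear_combination -hx)
      have hu : (b-a)^2 + e - d - b = 0 := by
        rcases mul_eq_zero.mp E1 with hx | hx
        · exact absurd hx hab
        · exact hx
      have hu' : (a-b)^2 + d - e - a = 0 := by
        rcases mul_eq_zero.mp E3 with hx | hx
        · exact absurd hx hab'
        · exact hx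
      have h4t : 4*(b-a)^2 = 1 := by
        have hx : (4*(b-a)^2 - 1) * e = 0 := by
          linear_combination E2 - ((b-a)^2+e-d-b)*hu
        rcases mul_eq_zero.mp hx with hx | hx
        · linear_combination hx
        · exact absurd hx he0
      have hfac : (2*(b-a) - 1) * (2*(b-a) + 1) = 0 := by linear_combination h4t
      rcases mul_eq_zero.mp hfac with hc | hc
      · have h2a : 2*a = 0 := by linear_combination -hu - hu' + (b-a)*hc
        have ha0 : a = 0 := by
          rcases mul_eq_zero.mp h2a with hx | hx
          · exact absurd hx h2
          · exact hx
        have hb2 : b = h := mul_left_cancel₀ h2 (by linear_combination hc + h2a - hh)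
        have hE : e = d + h^2 :=
          mul_left_cancel₀ h4 (by linear_combination 2*hu - 2*hu' + hc - (2*h+1)*hh)
        refine ⟨d, ⟨hd, hE ▸ he⟩, ?_⟩
        subst hE ha0 hb2
        rfl
      · have h2b : 2*b = 0 := by linear_combination -hu - hu' + (b-a)*hc
        have hb0 : b = 0 := by
          rcases mul_eq_zero.mp h2b with hx | hx
          · exact absurd hx h2
          · exact hx
        have ha2 : a = h := mul_left_cancel₀ h2 (by linear_combination -hc + h2b - hh)
        have hD : d = e + h^2 :=
          mul_left_cancel₀ h4 (by linear_combination -2*hu + 2*hu' - hc - (2*h+1)*hh)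
        refine ⟨e, ⟨he, hD ▸ hd⟩, ?_⟩
        subst hD hb0 ha2
        exact Set.pair_comm _ _
  · rintro ⟨d, ⟨hd, hd'⟩, rfl⟩
    refine ⟨Pq 0 d, Pq h (d + h^2), ?_, ?_, ?_, rfl, ?_, ?_⟩
    · intro hx
      exact half_ne_zero hh ((Pq_inj h2 hx).1).symm
    · exact (isQuad_iff h2).mpr ⟨0, d, hd, rfl⟩
    · exact (isQuad_iff h2).mpr ⟨h, d + h^2, hd', rfl⟩
    · refine (wedgeEq_iff h2 hd hd' hd').mpr ⟨?_, ?_⟩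
      · linear_combination h^2*hh
      · linear_combination (d*(2*h+1) + h^2*(2*h-1) + h^2*(2*h+1))*hh
    · refine (wedgeEq_iff h2 hd' hd hd).mpr ⟨?_, ?_⟩
      · ring
      · linear_combination d*(2*h+1)*hh

lemma typeIII_eq (hh : 2 * h = 1) :
    {S : Set F[X] | ∃ f g : F[X], f ≠ g ∧ IsQuad f ∧ IsQuad g ∧ S = {f, g} ∧
        WedgeEq f g g ∧ WedgeEq g f g} =
      ((fun d => ({Pq (h^2 - h) d, Pq (h^2) d} : Set F[X])) '' {d : F | ¬ IsSquare d}) ∪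
      ((fun d => ({Pq (h^2 + h) d, Pq (h^2) d} : Set F[X])) '' {d : F | ¬ IsSquare d}) := by
  have h2 : (2:F) ≠ 0 := two_ne_zero' hh
  have h4 : (4:F) ≠ 0 := four_ne_zero' hh
  ext S
  constructor
  · rintro ⟨f, g, hne, hf, hg, rfl, w1, w2⟩
    obtain ⟨a, d, hd, rfl⟩ := (isQuad_iff h2).mp hf
    obtain ⟨b, e, he, rfl⟩ := (isQuad_iff h2).mp hg
    obtain ⟨E1, E2⟩ := (wedgeEq_iff h2 hd he he).mp w1
    obtain ⟨E3, E4⟩ := (wedgeEq_iff h2 he hd he).mp w2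
    have he0 : e ≠ 0 := ns_ne_zero he
    by_cases hab : b - a = 0
    · exact absurd ⟨(b-a)^2 + e - d - b, by linear_combination -E2 + (4*e*(b-a))*hab⟩ he
    · have hab' : a - b ≠ 0 := fun hx => hab (by linear_combination -hx)
      have hu : (b-a)^2 + e - d - b = 0 := by
        rcases mul_eq_zero.mp E1 with hx | hx
        · exact absurd hx hab
        · exact hx
      have hu' : (a-b)^2 + d - e - b = 0 := by
        rcases mul_eq_zero.mp E3 with hx | hx
        · exact absurd hx hab'
        · exact hx
      have h4t : 4*(b-a)^2 = 1 := by
        have hx : (4*(b-a)^2 - 1) * e = 0 := by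
          linear_combination E2 - ((b-a)^2+e-d-b)*hu
        rcases mul_eq_zero.mp hx with hx | hx
        · linear_combination hx
        · exact absurd hx he0
      have hed : e = d := by
        have h2ed : 2*(e - d) = 0 := by linear_combination hu - hu'
        rcases mul_eq_zero.mp h2ed with hx | hx
        · exact absurd hx h2
        · linear_combination hx
      have hb1 : 4*b = 1 := by linear_combination -4*hu + 4*hed + h4t
      have hfac : (2*(b-a) - 1) * (2*(b-a) + 1) = 0 := by linear_combination h4t
      have hb : b = h^2 :=
        mul_left_cancel₀ h4 (by linear_combination hb1 - (2*h+1)*hh)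
      rcases mul_eq_zero.mp hfac with hc | hc
      · have ha : a = h^2 - h :=
          mul_left_cancel₀ h4 (by linear_combination hb1 - 2*hc - (2*h-1)*hh)
        left
        exact ⟨d, hd, by rw [ha, hb, hed]⟩
      · have ha : a = h^2 + h :=
          mul_left_cancel₀ h4 (by linear_combination hb1 - 2*hc - (2*h+3)*hh)
        right
        exact ⟨d, hd, by rw [ha, hb, hed]⟩
  · have hQ : ∀ x : F, ∀ d : F, ¬ IsSquare d → IsQuad (Pq x d) :=
      fun x d hd => (isQuad_iff h2).mpr ⟨x, d, hd, rfl⟩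
    rintro (⟨d, hd, rfl⟩ | ⟨d, hd, rfl⟩)
    · refine ⟨Pq (h^2 - h) d, Pq (h^2) d, ?_, hQ _ _ hd, hQ _ _ hd, rfl, ?_, ?_⟩
      · intro hx
        have := (Pq_inj h2 hx).1
        exact half_ne_zero hh (by linear_combination -this)
      · refine (wedgeEq_iff h2 hd hd hd).mpr ⟨by ring, ?_⟩
        linear_combination d*(2*h+1)*hh
      · refine (wedgeEq_iff h2 hd hd hd).mpr ⟨by ring, ?_⟩
        linear_combination d*(2*h+1)*hh
    · refine ⟨Pq (h^2 + h) d, Pq (h^2) d, ?_, hQ _ _ hd, hQ _ _ hd, rfl, ?_, ?_⟩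
      · intro hx
        have := (Pq_inj h2 hx).1
        exact half_ne_zero hh (by linear_combination this)
      · refine (wedgeEq_iff h2 hd hd hd).mpr ⟨by ring, ?_⟩
        linear_combination d*(2*h+1)*hh
      · refine (wedgeEq_iff h2 hd hd hd).mpr ⟨by ring, ?_⟩
        linear_combination d*(2*h+1)*hh

end Half
end StableAux

namespace StableAux
open Finset
variable {F : Type*} [Field F] [Fintype F] [DecidableEq F]

lemma char_ne_two (hodd : Odd (Fintype.card F)) : ringChar F ≠ 2 := by
  intro hc
  have h0 := FiniteField.even_card_iff_char_two.mp hc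
  obtain ⟨k, hk⟩ := hodd
  omega

lemma sum_one_sub_chi (hchar : ringChar F ≠ 2) :
    ∑ x : F, (1 - quadraticChar F x : ℤ) = (Fintype.card F : ℤ) := by
  rw [Finset.sum_sub_distrib, quadraticChar_sum_zero hchar]
  simp

lemma two_mul_card_nonsquare (hchar : ringChar F ≠ 2) :
    2 * ({d : F | ¬ IsSquare d}.ncard) = Fintype.card F - 1 := by
  have hset : {d : F | ¬ IsSquare d} = ↑(Finset.univ.filter fun d : F => ¬ IsSquare d) := by
    ext x; simp
  rw [hset, Set.ncard_coe_finset]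
  have key := sum_one_sub_chi (F := F) hchar
  rw [← Finset.sum_filter_add_sum_filter_not Finset.univ (fun d : F => ¬ IsSquare d)
    (fun x => (1 - quadraticChar F x : ℤ))] at key
  have hA : ∑ x ∈ Finset.univ.filter (fun d : F => ¬ IsSquare d),
      (1 - quadraticChar F x : ℤ) = 2 * (Finset.univ.filter fun d : F => ¬ IsSquare d).card := by
    rw [Finset.sum_congr rfl (fun x hx => ?_), Finset.sum_const, nsmul_eq_mul, mul_comm]
    rw [quadraticChar_neg_one_iff_not_isSquare.mpr (Finset.mem_filter.mp hx).2]
    ring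
  have hB : ∑ x ∈ Finset.univ.filter (fun d : F => ¬ ¬ IsSquare d),
      (1 - quadraticChar F x : ℤ) = 1 := by
    rw [Finset.sum_congr rfl (fun x hx => show (1 - quadraticChar F x : ℤ)
        = if x = (0:F) then (1:ℤ) else 0 from ?_)]
    · rw [Finset.sum_ite_eq']
      simp
    · have hsq : IsSquare x := not_not.mp (Finset.mem_filter.mp hx).2
      by_cases hx0 : x = 0
      · subst hx0; simp
      · rw [if_neg hx0, (quadraticChar_one_iff_isSquare hx0).mpr hsq]; ring
  rw [hA, hB] at key
  have hcard : (1:ℕ) ≤ Fintype.card F := Fintype.card_pos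
  have : 2 * (Finset.univ.filter fun d : F => ¬ IsSquare d).card + 1 = Fintype.card F := by
    exact_mod_cast key
  omega

lemma sum_J (hchar : ringChar F ≠ 2) {c : F} (hc : c ≠ 0) :
    ∑ x : F, quadraticChar F x * quadraticChar F (x + c) = -1 := by
  have h0 : ∑ x ∈ Finset.univ.erase (0:F), quadraticChar F x * quadraticChar F (x + c)
      = ∑ x : F, quadraticChar F x * quadraticChar F (x + c) :=
    Finset.sum_erase _ (by simp [quadraticChar_zero])
  rw [← h0]
  have step : ∀ x ∈ Finset.univ.erase (0:F),
      quadraticChar F x * quadraticChar F (x + c) = quadraticChar F (1 + c * x⁻¹) := by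
    intro x hx
    have hx0 : x ≠ 0 := (Finset.mem_erase.mp hx).1
    rw [← map_mul]
    have hmul : x * (x + c) = x^2 * (1 + c * x⁻¹) := by field_simp
    rw [hmul, map_mul, quadraticChar_sq_one' hx0, one_mul]
  rw [Finset.sum_congr rfl step]
  have hbij : ∑ x ∈ Finset.univ.erase (0:F), quadraticChar F (1 + c * x⁻¹)
      = ∑ y ∈ Finset.univ.erase (1:F), quadraticChar F y := by
    refine Finset.sum_nbij' (fun x => 1 + c * x⁻¹) (fun y => c * (y - 1)⁻¹) ?_ ?_ ?_ ?_ ?_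
    · intro x hx
      have hx0 : x ≠ 0 := (Finset.mem_erase.mp hx).1
      simp only [Finset.mem_erase, Finset.mem_univ, and_true]
      intro hcon
      apply hc
      have : c * x⁻¹ = 0 := by linear_combination hcon
      rcases mul_eq_zero.mp this with h | h
      · exact h
      · exact absurd (inv_eq_zero.mp h) hx0
    · intro y hy
      have hy1 : y ≠ 1 := (Finset.mem_erase.mp hy).1
      simp only [Finset.mem_erase, Finset.mem_univ, and_true]
      intro hcon
      rcases mul_eq_zero.mp hcon with h | h
      · exact hc h
      · exact hy1 (by linear_combination inv_eq_zero.mp h)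
    · intro x hx
      have hx0 : x ≠ 0 := (Finset.mem_erase.mp hx).1
      field_simp; simp [hc]
    · intro y hy
      have hy1 : y - 1 ≠ 0 := sub_ne_zero_of_ne (Finset.mem_erase.mp hy).1
      field_simp; ring
    · intro x hx
      rfl
  rw [hbij]
  have := Finset.add_sum_erase Finset.univ (fun y => quadraticChar F y) (Finset.mem_univ (1:F))
  have h1 : quadraticChar F 1 = 1 := map_one _
  have htot := quadraticChar_sum_zero (F := F) hchar
  try simp only [] at this
  rw [htot, h1] at this
  linarith

end StableAux

namespace StableAux
open Finset
variable {F : Type*} [Field F] [Fintype F] [DecidableEq F]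

lemma card_typeI_region (hchar : ringChar F ≠ 2) {c : F} (hc0 : c ≠ 0) (hcsq : IsSquare c) :
    4 * (({d : F | ¬ IsSquare d ∧ ¬ IsSquare (d + c)}).ncard : ℤ)
      = (Fintype.card F : ℤ) - 2 + quadraticChar F (-1) := by
  have hchi_c : quadraticChar F c = 1 := (quadraticChar_one_iff_isSquare hc0).mpr hcsq
  have hchi_negc : quadraticChar F (-c) = quadraticChar F (-1) := by
    rw [show (-c) = -1 * c by ring, map_mul, hchi_c, mul_one]
  have hset : {d : F | ¬ IsSquare d ∧ ¬ IsSquare (d + c)}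
      = ↑(Finset.univ.filter fun d : F => ¬ IsSquare d ∧ ¬ IsSquare (d + c)) := by
    ext x; simp
  rw [hset, Set.ncard_coe_finset]
  -- the key sum
  have expand : ∀ x : F, ((1 - quadraticChar F x) * (1 - quadraticChar F (x + c)) : ℤ)
      = 1 - quadraticChar F x - quadraticChar F (x + c)
        + quadraticChar F x * quadraticChar F (x + c) := fun x => by ring
  have hshift : ∑ x : F, (quadraticChar F (x + c) : ℤ) = 0 := by
    rw [show (fun x : F => (quadraticChar F (x + c) : ℤ))
      = fun x : F => ((fun y : F => (quadraticChar F y : ℤ)) ((Equiv.addRight c) x)) from rfl]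
    rw [Equiv.sum_comp (Equiv.addRight c) (fun y : F => (quadraticChar F y : ℤ))]
    exact_mod_cast quadraticChar_sum_zero hchar
  have hJ : ∑ x : F, (quadraticChar F x * quadraticChar F (x + c) : ℤ)
      = -1 := by exact_mod_cast sum_J hchar hc0
  have hA : ∑ x : F, ((1 - quadraticChar F x) * (1 - quadraticChar F (x + c)) : ℤ)
      = (Fintype.card F : ℤ) - 1 := by
    rw [Finset.sum_congr rfl (fun x _ => expand x)]
    rw [Finset.sum_add_distrib, Finset.sum_sub_distrib, Finset.sum_sub_distrib]
    rw [hshift, hJ]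
    have : ∑ x : F, (quadraticChar F x : ℤ) = 0 := by
      exact_mod_cast quadraticChar_sum_zero hchar
    rw [this]
    simp only [Finset.sum_const, Finset.card_univ, nsmul_eq_mul, mul_one, sub_zero]
    ring
  -- split
  have hsplit := Finset.sum_filter_add_sum_filter_not Finset.univ
    (fun d : F => ¬ IsSquare d ∧ ¬ IsSquare (d + c))
    (fun x : F => ((1 - quadraticChar F x) * (1 - quadraticChar F (x + c)) : ℤ))
  have hP : ∑ x ∈ Finset.univ.filter (fun d : F => ¬ IsSquare d ∧ ¬ IsSquare (d + c)),
      ((1 - quadraticChar F x) * (1 - quadraticChar F (x + c)) : ℤ)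
      = 4 * (Finset.univ.filter fun d : F => ¬ IsSquare d ∧ ¬ IsSquare (d + c)).card := by
    rw [Finset.sum_congr rfl (fun x hx => ?_), Finset.sum_const, nsmul_eq_mul, mul_comm]
    obtain ⟨hx1, hx2⟩ := (Finset.mem_filter.mp hx).2
    rw [quadraticChar_neg_one_iff_not_isSquare.mpr hx1,
      quadraticChar_neg_one_iff_not_isSquare.mpr hx2]
    ring
  have hQ : ∑ x ∈ Finset.univ.filter (fun d : F => ¬ (¬ IsSquare d ∧ ¬ IsSquare (d + c))),
      ((1 - quadraticChar F x) * (1 - quadraticChar F (x + c)) : ℤ)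
      = 1 - quadraticChar F (-1) := by
    rw [Finset.sum_congr rfl (fun x hx => show ((1 - quadraticChar F x) * (1 - quadraticChar F (x + c)) : ℤ)
        = if x = (-c:F) then (1 - quadraticChar F (-1) : ℤ) else 0 from ?_)]
    · rw [Finset.sum_ite_eq']
      rw [if_pos]
      simp only [Finset.mem_filter, Finset.mem_univ, true_and]
      intro hcon
      exact hcon.2 (by rw [neg_add_cancel]; exact IsSquare.zero)
    · by_cases hxc : x = -c
      · subst hxc
        rw [if_pos rfl, show (-c + c) = (0:F) by ring, quadraticChar_zero, ← hchi_negc]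
        ring
      · rw [if_neg hxc]
        have hnp := (Finset.mem_filter.mp hx).2
        rcases not_and_or.mp hnp with hsq | hsq
        · have hsq' : IsSquare x := not_not.mp hsq
          by_cases hx0 : x = 0
          · subst hx0
            rw [show ((0:F) + c) = c by ring, hchi_c]
            ring
          · rw [(quadraticChar_one_iff_isSquare hx0).mpr hsq']
            ring
        · have hsq' : IsSquare (x + c) := not_not.mp hsq
          have hxc0 : x + c ≠ 0 := fun hcon => hxc (by linear_combination hcon)
          rw [(quadraticChar_one_iff_isSquare hxc0).mpr hsq']
          ring
  rw [hP, hQ] at hsplit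
  rw [hA] at hsplit
  linarith

end StableAux


open StableAux

/-- Theorem 5.4 (number of quadratic stable 2-sets over `F_q`, `q` odd):
(1) the number of unordered pairs `{f, g}` of distinct monic irreducible quadratics
with `f ▷ g = g` and `g ▷ f = f` (type I) is `(q-1)/4` if `q ≡ 1 (mod 4)` and
`(q-3)/4` if `q ≡ 3 (mod 4)`;
(2) there are no type II pairs (`f ▷ g = f` and `g ▷ f = g`);
(3) the number of unordered pairs with `f ▷ g = g` and `g ▷ f = g` (type III)
is `q - 1`. -/
theorem number_of_quadratic_stable_2sets (F : Type*) [Field F] [Fintype F]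
    (hodd : Odd (Fintype.card F)) :
    ((Fintype.card F % 4 = 1 →
      {S : Set F[X] | ∃ f g : F[X], f ≠ g ∧ IsQuad f ∧ IsQuad g ∧ S = {f, g} ∧
        WedgeEq f g g ∧ WedgeEq g f f}.ncard = (Fintype.card F - 1) / 4) ∧
     (Fintype.card F % 4 = 3 →
      {S : Set F[X] | ∃ f g : F[X], f ≠ g ∧ IsQuad f ∧ IsQuad g ∧ S = {f, g} ∧
        WedgeEq f g g ∧ WedgeEq g f f}.ncard = (Fintype.card F - 3) / 4)) ∧
    (¬ ∃ f g : F[X], f ≠ g ∧ IsQuad f ∧ IsQuad g ∧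
        WedgeEq f g f ∧ WedgeEq g f g) ∧
    ({S : Set F[X] | ∃ f g : F[X], f ≠ g ∧ IsQuad f ∧ IsQuad g ∧ S = {f, g} ∧
        WedgeEq f g g ∧ WedgeEq g f g}.ncard = Fintype.card F - 1) := by
  classical
  have hchar : ringChar F ≠ 2 := char_ne_two hodd
  have h2 : (2:F) ≠ 0 := Ring.two_ne_zero hchar
  have hh : (2:F) * 2⁻¹ = 1 := mul_inv_cancel₀ h2
  have hhne : (2⁻¹:F) ≠ 0 := half_ne_zero hh
  have hq1 : 1 ≤ Fintype.card F := Fintype.card_pos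
  refine ⟨?_, no_typeII h2, ?_⟩
  · -- type I
    have hNimg : {S : Set F[X] | ∃ f g : F[X], f ≠ g ∧ IsQuad f ∧ IsQuad g ∧ S = {f, g} ∧
        WedgeEq f g g ∧ WedgeEq g f f}.ncard
        = {d : F | ¬ IsSquare d ∧ ¬ IsSquare (d + (2⁻¹:F)^2)}.ncard := by
      rw [typeI_eq hh]
      apply Set.ncard_image_of_injOn
      intro d hd d' hd' hEq
      simp only [] at hEq
      have hmem : Pq (0:F) d ∈ ({Pq (0:F) d', Pq (2⁻¹:F) (d' + (2⁻¹:F)^2)} : Set F[X]) := by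
        rw [← hEq]; exact Set.mem_insert _ _
      rcases hmem with hm | hm
      · exact (Pq_inj h2 hm).2
      · exact absurd ((Pq_inj h2 hm).1).symm hhne
    have hc0 : ((2⁻¹:F)^2) ≠ 0 := pow_ne_zero _ hhne
    have hcsq : IsSquare ((2⁻¹:F)^2) := ⟨2⁻¹, by ring⟩
    have hcount := card_typeI_region hchar hc0 hcsq
    rw [hNimg]
    set N := {d : F | ¬ IsSquare d ∧ ¬ IsSquare (d + (2⁻¹:F)^2)}.ncard with hN
    have hneg0 : (-1:F) ≠ 0 := neg_ne_zero.mpr one_ne_zero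
    constructor
    · intro hmod
      have hsq : IsSquare (-1:F) := by
        rw [FiniteField.isSquare_neg_one_iff]; omega
      have hchi : quadraticChar F (-1) = 1 := (quadraticChar_one_iff_isSquare hneg0).mpr hsq
      rw [hchi] at hcount
      have hNat : 4 * N + 1 = Fintype.card F := by
        have : (4 * N + 1 : ℤ) = (Fintype.card F : ℤ) := by linarith
        exact_mod_cast this
      omega
    · intro hmod
      have hsq : ¬ IsSquare (-1:F) := by
        rw [FiniteField.isSquare_neg_one_iff]; omega
      have hchi : quadraticChar F (-1) = -1 := quadraticChar_neg_one_iff_not_isSquare.mpr hsq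
      rw [hchi] at hcount
      have hNat : 4 * N + 3 = Fintype.card F := by
        have : (4 * N + 3 : ℤ) = (Fintype.card F : ℤ) := by linarith
        exact_mod_cast this
      omega
  · -- type III
    rw [typeIII_eq hh]
    have hfin : {d : F | ¬ IsSquare d}.Finite := Set.toFinite _
    have hdisj : Disjoint
        ((fun d => ({Pq ((2⁻¹:F)^2 - 2⁻¹) d, Pq ((2⁻¹:F)^2) d} : Set F[X])) '' {d : F | ¬ IsSquare d})
        ((fun d => ({Pq ((2⁻¹:F)^2 + 2⁻¹) d, Pq ((2⁻¹:F)^2) d} : Set F[X])) '' {d : F | ¬ IsSquare d}) := by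
      rw [Set.disjoint_left]
      rintro S ⟨d, hd, rfl⟩ ⟨d', hd', hEq⟩
      simp only [] at hEq
      have hmem : Pq ((2⁻¹:F)^2 + 2⁻¹) d' ∈
          ({Pq ((2⁻¹:F)^2 - 2⁻¹) d, Pq ((2⁻¹:F)^2) d} : Set F[X]) := by
        rw [← hEq]; exact Set.mem_insert _ _
      rcases hmem with hm | hm
      · have := (Pq_inj h2 hm).1
        exact one_ne_zero (α := F) (by linear_combination this - hh)
      · have := (Pq_inj h2 hm).1
        exact hhne (by linear_combination this)
    have hinj1 : Set.InjOn (fun d => ({Pq ((2⁻¹:F)^2 - 2⁻¹) d, Pq ((2⁻¹:F)^2) d} : Set F[X]))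
        {d : F | ¬ IsSquare d} := by
      intro d hd d' hd' hEq
      simp only [] at hEq
      have hmem : Pq ((2⁻¹:F)^2 - 2⁻¹) d ∈
          ({Pq ((2⁻¹:F)^2 - 2⁻¹) d', Pq ((2⁻¹:F)^2) d'} : Set F[X]) := by
        rw [← hEq]; exact Set.mem_insert _ _
      rcases hmem with hm | hm
      · exact (Pq_inj h2 hm).2
      · have := (Pq_inj h2 hm).1
        exact absurd (by linear_combination -this) hhne
    have hinj2 : Set.InjOn (fun d => ({Pq ((2⁻¹:F)^2 + 2⁻¹) d, Pq ((2⁻¹:F)^2) d} : Set F[X]))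
        {d : F | ¬ IsSquare d} := by
      intro d hd d' hd' hEq
      simp only [] at hEq
      have hmem : Pq ((2⁻¹:F)^2 + 2⁻¹) d ∈
          ({Pq ((2⁻¹:F)^2 + 2⁻¹) d', Pq ((2⁻¹:F)^2) d'} : Set F[X]) := by
        rw [← hEq]; exact Set.mem_insert _ _
      rcases hmem with hm | hm
      · exact (Pq_inj h2 hm).2
      · have := (Pq_inj h2 hm).1
        exact absurd (by linear_combination this) hhne
    rw [Set.ncard_union_eq hdisj (hfin.image _) (hfin.image _),
      Set.ncard_image_of_injOn hinj1, Set.ncard_image_of_injOn hinj2]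
    have := two_mul_card_nonsquare (F := F) hchar
    omega
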